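/- arXiv:2602.13552 — 3 statements merged into one kernel-verified Lean document; each statement's English description precedes it below -/
import Mathlib

section
/- Let R be a commutative ring, M a b×a matrix over R with a + d = b, and let N = R^b / (column span of M) be the cokernel of M, with projection π : R^b → N. Then there is a well-defined alternating R-multilinear map A : N^d → R satisfying A(π(u_1), ..., π(u_d)) = det [M | u_1 ⋯ u_d] for all u_1, ..., u_d ∈ R^b, where [M | u_1 ⋯ u_d] is the square matrix obtained by appending the columns u_i to M. -/
/-- The square `b × b` matrix whose first `a` columns are the columns of `M`
and whose last `d` columns are `u 0, …, u (d-1)`. -/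
def appendedCols {R : Type*} [CommRing R] {a b d : ℕ} (h : a + d = b)
    (M : Matrix (Fin b) (Fin a) R) (u : Fin d → Fin b → R) :
    Matrix (Fin b) (Fin b) R :=
  Matrix.of fun i j =>
    Sum.elim (fun ja => M i ja) (fun jd => u jd i)
      ((finSumFinEquiv.trans (finCongr h)).symm j)

namespace AlexAux

variable {R : Type*} [CommRing R] {a b d : ℕ} (h : a + d = b)
  (M : Matrix (Fin b) (Fin a) R)

/-- The index equivalence. -/
def e (h : a + d = b) : Fin a ⊕ Fin d ≃ Fin b := finSumFinEquiv.trans (finCongr h)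

lemma e_inl_ne_inr (ja : Fin a) (jd : Fin d) : e h (Sum.inl ja) ≠ e h (Sum.inr jd) := by
  intro hx
  have := (e h).injective hx
  simp at this

lemma e_inr_ne_inr {i j : Fin d} (hij : i ≠ j) : e h (Sum.inr i) ≠ e h (Sum.inr j) := by
  intro hx
  have := (e h).injective hx
  simp only [Sum.inr.injEq] at this
  exact hij this

lemma appendedCols_apply_inl (u : Fin d → Fin b → R) (i : Fin b) (ja : Fin a) :
    appendedCols h M u i (e h (Sum.inl ja)) = M i ja := by
  simp [appendedCols, e]

lemma appendedCols_apply_inr (u : Fin d → Fin b → R) (i : Fin b) (jd : Fin d) :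
    appendedCols h M u i (e h (Sum.inr jd)) = u jd i := by
  simp [appendedCols, e]

lemma appendedCols_update (u : Fin d → Fin b → R) (j : Fin d) (x : Fin b → R) :
    appendedCols h M (Function.update u j x)
      = (appendedCols h M u).updateCol (e h (Sum.inr j)) x := by
  ext i k
  rw [Matrix.updateCol_apply]
  by_cases hk : k = e h (Sum.inr j)
  · subst hk
    simp [appendedCols, e]
  · rw [if_neg hk]
    simp only [appendedCols, Matrix.of_apply]
    rcases hs : ((finSumFinEquiv.trans (finCongr h)).symm k) with ja | jd
    · simp
    · simp only [Sum.elim_inr]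
      have hjd : jd ≠ j := by
        rintro rfl
        exact hk (by rw [e, ← hs, Equiv.apply_symm_apply])
      rw [Function.update_of_ne hjd]

lemma updateCol_self_eq (u : Fin d → Fin b → R) (j : Fin d) :
    (appendedCols h M u).updateCol (e h (Sum.inr j)) (fun i => u j i)
      = appendedCols h M u := by
  ext i k
  rw [Matrix.updateCol_apply]
  split
  · next hk => rw [hk, appendedCols_apply_inr]
  · rfl

lemma det_update_add_mulVec (u : Fin d → Fin b → R) (j : Fin d) (c : Fin a → R) :
    (appendedCols h M (Function.update u j (u j + M.mulVec c))).det
      = (appendedCols h M u).det := by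
  rw [appendedCols_update]
  have key : ∀ S : Finset (Fin a),
      ((appendedCols h M u).updateCol (e h (Sum.inr j))
        (fun i => u j i + ∑ ja ∈ S, c ja * M i ja)).det = (appendedCols h M u).det := by
    intro S
    induction S using Finset.induction with
    | empty => simpa using congrArg Matrix.det (updateCol_self_eq h M u j)
    | @insert ja S hja ih =>
      have hfun : (fun i => u j i + ∑ jb ∈ insert ja S, c jb * M i jb)
          = ((fun i => u j i + ∑ jb ∈ S, c jb * M i jb) + fun i => c ja * M i ja) := by
        funext i
        rw [Finset.sum_insert hja]
        simp only [Pi.add_apply]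
        ring
      rw [hfun, Matrix.det_updateCol_add, ih]
      have hsm : (fun i => c ja * M i ja) = c ja • (fun i => M i ja) := by
        funext i; simp
      rw [hsm, Matrix.det_updateCol_smul]
      have hz : ((appendedCols h M u).updateCol (e h (Sum.inr j))
          (fun i => M i ja)).det = 0 := by
        apply Matrix.det_zero_of_column_eq
          (i := e h (Sum.inl ja)) (j := e h (Sum.inr j))
        · exact e_inl_ne_inr h ja j
        · intro k
          rw [Matrix.updateCol_ne (e_inl_ne_inr h ja j), Matrix.updateCol_self,
            appendedCols_apply_inl]
      rw [hz, mul_zero, add_zero]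
  have hmv : u j + M.mulVec c = fun i => u j i + ∑ ja ∈ Finset.univ, c ja * M i ja := by
    funext i
    simp [Matrix.mulVec, dotProduct, mul_comm]
  rw [hmv]
  exact key Finset.univ

lemma det_congr_update (u : Fin d → Fin b → R) (j : Fin d) {w w' : Fin b → R}
    (hw : w' - w ∈ LinearMap.range M.mulVecLin) :
    (appendedCols h M (Function.update u j w')).det
      = (appendedCols h M (Function.update u j w)).det := by
  obtain ⟨c, hc⟩ := hw
  have hw' : w' = w + M.mulVec c := by
    have : M.mulVec c = w' - w := hc
    rw [this]; ring_nf
  have hupd : Function.update u j w'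
      = Function.update (Function.update u j w) j
          ((Function.update u j w) j + M.mulVec c) := by
    rw [Function.update_self, ← hw', Function.update_idem]
  rw [hupd, det_update_add_mulVec]

lemma det_congr (u v : Fin d → Fin b → R)
    (hv : ∀ j, v j - u j ∈ LinearMap.range M.mulVecLin) :
    (appendedCols h M v).det = (appendedCols h M u).det := by
  have key : ∀ S : Finset (Fin d),
      (appendedCols h M (fun j => if j ∈ S then v j else u j)).det
        = (appendedCols h M u).det := by
    intro S
    induction S using Finset.induction with
    | empty => simp
    | @insert j S hj ih =>
      have hfun : (fun k => if k ∈ insert j S then v k else u k)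
          = Function.update (fun k => if k ∈ S then v k else u k) j (v j) := by
        funext k
        rcases eq_or_ne k j with rfl | hk
        · simp
        · simp [Function.update_of_ne hk, hk]
      rw [hfun]
      have hself : (fun k => if k ∈ S then v k else u k)
          = Function.update (fun k => if k ∈ S then v k else u k) j
              ((fun k => if k ∈ S then v k else u k) j) := by
        rw [Function.update_eq_self]
      calc (appendedCols h M
              (Function.update (fun k => if k ∈ S then v k else u k) j (v j))).det
          = (appendedCols h M
              (Function.update (fun k => if k ∈ S then v k else u k) j
                ((fun k => if k ∈ S then v k else u k) j))).det := by
            apply det_congr_update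
            simp only [hj, if_neg]
            exact hv j
        _ = (appendedCols h M u).det := by rw [← hself, ih]
  have := key Finset.univ
  simpa using this

end AlexAux

/-- There is a well-defined alternating `R`-multilinear map on the cokernel of `M`
computing the appended determinant. -/
theorem exists_alternating_alexanderFunction {R : Type*} [CommRing R] {a b d : ℕ}
    (h : a + d = b) (M : Matrix (Fin b) (Fin a) R) :
    ∃ A : AlternatingMap R ((Fin b → R) ⧸ LinearMap.range M.mulVecLin) R (Fin d),
      ∀ u : Fin d → (Fin b → R),
        A (fun j => Submodule.mkQ (LinearMap.range M.mulVecLin) (u j))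
          = (appendedCols h M u).det := by
  classical
  set W := LinearMap.range M.mulVecLin with hW
  set s : ((Fin b → R) ⧸ W) → (Fin b → R) :=
    Function.surjInv (Submodule.mkQ_surjective W) with hsdef
  have hs : ∀ x, Submodule.mkQ W (s x) = x :=
    Function.surjInv_eq (Submodule.mkQ_surjective W)
  have hmem : ∀ (w w' : Fin b → R), Submodule.mkQ W w = Submodule.mkQ W w' →
      w - w' ∈ W := by
    intro w w' hww
    rwa [← Submodule.Quotient.eq]
  -- invariance under choice of representatives
  have inv : ∀ (u v : Fin d → Fin b → R),
      (∀ j, Submodule.mkQ W (u j) = Submodule.mkQ W (v j)) →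
      (appendedCols h M v).det = (appendedCols h M u).det := by
    intro u v huv
    exact AlexAux.det_congr h M u v (fun j => hmem _ _ (huv j).symm)
  refine ⟨⟨⟨fun x => (appendedCols h M (fun j => s (x j))).det, ?_, ?_⟩, ?_⟩, ?_⟩
  · intro dec x i p q
    have hd : dec = instDecidableEqFin d := Subsingleton.elim _ _
    subst hd
    have h1 : ∀ z : (Fin b → R) ⧸ W,
        (fun j => s (Function.update x i z j)) = Function.update (fun j => s (x j)) i (s z) := by
      intro z
      funext j
      rcases eq_or_ne j i with rfl | hj
      · simp
      · simp [Function.update_of_ne hj]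
    simp only [h1]
    have h2 : (appendedCols h M (Function.update (fun j => s (x j)) i (s (p + q)))).det
        = (appendedCols h M (Function.update (fun j => s (x j)) i (s p + s q))).det := by
      apply AlexAux.det_congr_update
      apply hmem
      rw [hs, map_add, hs, hs]
    rw [h2, AlexAux.appendedCols_update, Matrix.det_updateCol_add,
      ← AlexAux.appendedCols_update, ← AlexAux.appendedCols_update]
  · intro dec x i c p
    have hd : dec = instDecidableEqFin d := Subsingleton.elim _ _
    subst hd
    have h1 : ∀ z : (Fin b → R) ⧸ W,
        (fun j => s (Function.update x i z j)) = Function.update (fun j => s (x j)) i (s z) := by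
      intro z
      funext j
      rcases eq_or_ne j i with rfl | hj
      · simp
      · simp [Function.update_of_ne hj]
    simp only [h1]
    have h2 : (appendedCols h M (Function.update (fun j => s (x j)) i (s (c • p)))).det
        = (appendedCols h M (Function.update (fun j => s (x j)) i (c • s p))).det := by
      apply AlexAux.det_congr_update
      apply hmem
      rw [hs, map_smul, hs]
    rw [h2, AlexAux.appendedCols_update, Matrix.det_updateCol_smul,
      ← AlexAux.appendedCols_update, smul_eq_mul]
  · intro x i j hij hne
    apply Matrix.det_zero_of_column_eq
      (i := AlexAux.e h (Sum.inr i)) (j := AlexAux.e h (Sum.inr j))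
    · exact AlexAux.e_inr_ne_inr h hne
    · intro k
      rw [AlexAux.appendedCols_apply_inr, AlexAux.appendedCols_apply_inr, hij]
  · intro u
    exact inv u (fun j => s (Submodule.mkQ W (u j))) (fun j => (hs _).symm)
end

section
/- Let R be a commutative ring, N an R-module, and d ≥ 0. Suppose N admits two injective free presentations: exact sequences 0 → R^a →^{M} R^b →^{π} N → 0 and 0 → R^{a'} →^{M'} R^{b'} →^{π'} N → 0 with b − a = b' − a' = d. Then there exists a unit u ∈ Rˣ such that for all u_1, ..., u_d ∈ R^b and w_1, ..., w_d ∈ R^{b'} satisfying π(u_i) = π'(w_i) for each i, one has det [M' | w_1 ⋯ w_d] = u · det [M | u_1 ⋯ u_d]. -/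
set_option linter.unusedSectionVars false
set_option maxHeartbeats 1600000


section AuxDefs

variable {R : Type*} [CommRing R]

/-- Generalized appended-columns matrix. -/
def appAux {ι κ : Type*} {d : ℕ} (e : ι ≃ κ ⊕ Fin d)
    (M : Matrix ι κ R) (u : Fin d → ι → R) : Matrix ι ι R :=
  Matrix.of fun i j =>
    Sum.elim (fun ja => M i ja) (fun jd => u jd i) (e j)

variable {ι κ κ₂ : Type*} [Fintype ι] [DecidableEq ι] [Fintype κ] [DecidableEq κ]
  [Fintype κ₂] [DecidableEq κ₂] {d : ℕ}

lemma appAux_update (e : ι ≃ κ ⊕ Fin d) (M : Matrix ι κ R) (u : Fin d → ι → R)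
    (k : Fin d) (x : ι → R) :
    appAux e M (Function.update u k x)
      = (appAux e M u).updateCol (e.symm (Sum.inr k)) x := by
  ext i j
  rw [Matrix.updateCol_apply]
  by_cases hj : j = e.symm (Sum.inr k)
  · subst hj
    simp [appAux]
  · simp only [if_neg hj]
    show Sum.elim _ _ (e j) = Sum.elim _ _ (e j)
    rcases he : e j with ja | jd
    · simp
    · have hne : jd ≠ k := by
        rintro rfl
        exact hj (by rw [← he]; simp)
      simp [Function.update_of_ne hne]

lemma appAux_det_eq_zero (e : ι ≃ κ ⊕ Fin d) (M : Matrix ι κ R)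
    (u : Fin d → ι → R) (k : Fin d) (c : κ → R) (hk : u k = M.mulVec c) :
    (appAux e M u).det = 0 := by
  have h1 : appAux e M u = appAux e M (Function.update u k (M.mulVec c)) := by
    rw [← hk, Function.update_eq_self]
  rw [h1, appAux_update]
  set A := appAux e M u with hA
  set c' : ι → R := fun i => Sum.elim c 0 (e i) with hc'
  have key : M.mulVec c = fun i => ∑ j, c' j • A i j := by
    funext i
    have := Fintype.sum_equiv e.symm
      (fun s : κ ⊕ Fin d => Sum.elim c 0 s • A i (e.symm s))
      (fun j : ι => c' j • A i j)
      (by intro s; simp [hc'])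
    rw [← this, Fintype.sum_sum_type]
    have hterm : ∀ ja : κ, A i (e.symm (Sum.inl ja)) = M i ja := by
      intro ja; simp [hA, appAux]
    simp only [Sum.elim_inl, Sum.elim_inr, zero_smul, Finset.sum_const_zero, add_zero]
    simp only [hterm]
    simp [Matrix.mulVec, dotProduct, mul_comm]
  rw [key, Matrix.det_updateCol_sum]
  simp [hc']

lemma appAux_det_eq_of_pi_eq {N : Type*} [AddCommGroup N] [Module R N]
    (e : ι ≃ κ ⊕ Fin d) (M : Matrix ι κ R) (π : (ι → R) →ₗ[R] N)
    (hM : LinearMap.range M.mulVecLin = LinearMap.ker π)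
    (us us' : Fin d → ι → R) (hus : ∀ i, π (us i) = π (us' i)) :
    (appAux e M us').det = (appAux e M us).det := by
  classical
  have key : ∀ s : Finset (Fin d),
      (appAux e M (fun i => if i ∈ s then us' i else us i)).det = (appAux e M us).det := by
    intro s
    induction s using Finset.induction_on with
    | empty => simp
    | @insert k s hk ih =>
      set v : Fin d → ι → R := fun i => if i ∈ s then us' i else us i with hv
      have hfun : (fun i => if i ∈ insert k s then us' i else us i)
          = Function.update v k (us' k) := by
        funext i
        by_cases hi : i = k
        · subst hi; simp
        · simp [Function.update_of_ne hi, hv, hi]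
      have hker : us' k - us k ∈ LinearMap.ker π := by
        simp [LinearMap.mem_ker, map_sub, hus k]
      rw [← hM] at hker
      obtain ⟨c, hc⟩ := hker
      have hvk : v k = us k := by simp [hv, hk]
      have husk : us' k = v k + M.mulVec c := by
        rw [hvk]
        have : M.mulVec c = us' k - us k := hc
        rw [this]; abel
      rw [hfun, husk, appAux_update, Matrix.det_updateCol_add]
      have e1 : (appAux e M v).updateCol (e.symm (Sum.inr k)) (v k)
          = appAux e M v := by
        rw [← appAux_update, Function.update_eq_self]
      have e2 : ((appAux e M v).updateCol (e.symm (Sum.inr k)) (M.mulVec c)).det = 0 := by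
        rw [← appAux_update]
        exact appAux_det_eq_zero e M _ k c (by simp)
      rw [e1, e2, add_zero, ih]
  have := key Finset.univ
  simpa using this

lemma appAux_mul (e₁ : ι ≃ κ ⊕ Fin d) (e₂ : ι ≃ κ₂ ⊕ Fin d)
    (M₂ : Matrix ι κ₂ R) (P : Matrix κ₂ κ R) (v : Fin d → ι → R) :
    appAux e₁ (M₂ * P) v
      = appAux e₂ M₂ v *
        (Matrix.fromBlocks P 0 0 (1 : Matrix (Fin d) (Fin d) R)).submatrix ⇑e₂ ⇑e₁ := by
  ext i j
  rw [Matrix.mul_apply]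
  have hre := Fintype.sum_equiv e₂.symm
    (fun s : κ₂ ⊕ Fin d =>
      Sum.elim (fun ja => M₂ i ja) (fun jd => v jd i) s
        * Matrix.fromBlocks P 0 0 (1 : Matrix (Fin d) (Fin d) R) s (e₁ j))
    (fun k : ι => appAux e₂ M₂ v i k
        * Matrix.fromBlocks P 0 0 (1 : Matrix (Fin d) (Fin d) R) (e₂ k) (e₁ j))
    (by intro s; simp [appAux])
  rw [Matrix.submatrix]
  show _ = ∑ k, appAux e₂ M₂ v i k * Matrix.fromBlocks P 0 0 1 (e₂ k) (e₁ j)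
  rw [← hre, Fintype.sum_sum_type]
  show Sum.elim (fun ja => (M₂ * P) i ja) (fun jd => v jd i) (e₁ j) = _
  rcases e₁ j with jc | jd0
  · simp [Matrix.mul_apply]
  · simp [Matrix.one_apply]

lemma appAux_det_comp (e₁ : ι ≃ κ ⊕ Fin d) (e₂ : ι ≃ κ₂ ⊕ Fin d)
    (M₁ : Matrix ι κ R) (M₂ : Matrix ι κ₂ R)
    (h₁ : Function.Injective M₁.mulVecLin) (h₂ : Function.Injective M₂.mulVecLin)
    (hr : LinearMap.range M₁.mulVecLin = LinearMap.range M₂.mulVecLin) :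
    ∃ u : Rˣ, ∀ v : Fin d → ι → R,
      (appAux e₁ M₁ v).det = (u : R) * (appAux e₂ M₂ v).det := by
  classical
  let ψ₁ := LinearEquiv.ofInjective M₁.mulVecLin h₁
  let ψ₂ := LinearEquiv.ofInjective M₂.mulVecLin h₂
  let φ : (κ → R) ≃ₗ[R] (κ₂ → R) :=
    ψ₁ ≪≫ₗ LinearEquiv.ofEq _ _ hr ≪≫ₗ ψ₂.symm
  have hφ : ∀ x, M₂.mulVecLin (φ x) = M₁.mulVecLin x := by
    intro x
    have : ψ₂ (φ x) = LinearEquiv.ofEq _ _ hr (ψ₁ x) := by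
      simp [φ, LinearEquiv.trans_apply]
    have hcoe := congrArg (Subtype.val) this
    simpa [ψ₁, ψ₂, LinearEquiv.ofInjective_apply] using hcoe
  set P : Matrix κ₂ κ R := LinearMap.toMatrix' (φ : (κ → R) →ₗ[R] (κ₂ → R)) with hP
  set P' : Matrix κ κ₂ R := LinearMap.toMatrix' (φ.symm : (κ₂ → R) →ₗ[R] (κ → R)) with hP'
  have hmlP : P.mulVecLin = (φ : (κ → R) →ₗ[R] (κ₂ → R)) := by
    rw [hP]; exact Matrix.toLin'_toMatrix' _
  have hM1 : M₂ * P = M₁ := by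
    apply (LinearMap.toMatrix' (R := R)).symm.injective
    show (M₂ * P).mulVecLin = M₁.mulVecLin
    rw [Matrix.mulVecLin_mul, hmlP]
    refine LinearMap.ext fun x => ?_
    simp only [LinearMap.comp_apply]
    exact hφ x
  have hPP' : P * P' = 1 := by
    rw [hP, hP', ← LinearMap.toMatrix'_comp]
    have : (φ : (κ → R) →ₗ[R] (κ₂ → R)) ∘ₗ (φ.symm : (κ₂ → R) →ₗ[R] (κ → R))
        = LinearMap.id := by
      ext x; simp
    rw [this, LinearMap.toMatrix'_id]
  set Q : Matrix ι ι R :=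
    (Matrix.fromBlocks P 0 0 (1 : Matrix (Fin d) (Fin d) R)).submatrix ⇑e₂ ⇑e₁ with hQ
  set Q' : Matrix ι ι R :=
    (Matrix.fromBlocks P' 0 0 (1 : Matrix (Fin d) (Fin d) R)).submatrix ⇑e₁ ⇑e₂ with hQ'
  have hQQ' : Q * Q' = 1 := by
    rw [hQ, hQ', Matrix.submatrix_mul_equiv, Matrix.fromBlocks_multiply]
    simp [hPP', Matrix.fromBlocks_one]
  have hdet : IsUnit Q.det := by
    apply IsUnit.of_mul_eq_one Q'.det
    rw [← Matrix.det_mul, hQQ', Matrix.det_one]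
  refine ⟨hdet.unit, fun v => ?_⟩
  have := appAux_mul e₁ e₂ M₂ P v
  rw [hM1] at this
  rw [this, Matrix.det_mul, IsUnit.unit_spec, mul_comm]

end AuxDefs

section Blocks

variable {R : Type*} [CommRing R] {a b a' b' d : ℕ}

/-- The equivalence used for the first big presentation. -/
def eqvMM (e : Fin b ≃ Fin a ⊕ Fin d) (b' : ℕ) :
    (Fin b ⊕ Fin b') ≃ (Fin a ⊕ Fin b') ⊕ Fin d :=
  (e.sumCongr (Equiv.refl (Fin b'))).trans
    ((Equiv.sumAssoc (Fin a) (Fin d) (Fin b')).trans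
      (((Equiv.refl (Fin a)).sumCongr (Equiv.sumComm (Fin d) (Fin b'))).trans
        (Equiv.sumAssoc (Fin a) (Fin b') (Fin d)).symm))

/-- The equivalence used for the second big presentation. -/
def eqvNN (e' : Fin b' ≃ Fin a' ⊕ Fin d) (b : ℕ) :
    (Fin b ⊕ Fin b') ≃ (Fin b ⊕ Fin a') ⊕ Fin d :=
  ((Equiv.refl (Fin b)).sumCongr e').trans
    (Equiv.sumAssoc (Fin b) (Fin a') (Fin d)).symm

lemma block1 (e : Fin b ≃ Fin a ⊕ Fin d) (M : Matrix (Fin b) (Fin a) R)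
    (f : Matrix (Fin b) (Fin b') R) (us : Fin d → Fin b → R) :
    appAux (eqvMM e b') (Matrix.fromBlocks M (-f) 0 1)
        (fun i => Sum.elim (us i) 0)
      = Matrix.fromBlocks (appAux e M us) (-f) 0 1 := by
  ext i j
  rcases i with i | i <;> rcases j with j | j
  · rcases he : e j with ja | jd <;> simp [eqvMM, he, appAux]
  · simp [eqvMM, appAux]
  · rcases he : e j with ja | jd <;> simp [eqvMM, he, appAux]
  · simp [eqvMM, appAux]

lemma block2 (e' : Fin b' ≃ Fin a' ⊕ Fin d) (M' : Matrix (Fin b') (Fin a') R)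
    (f' : Matrix (Fin b') (Fin b) R) (ws : Fin d → Fin b' → R) :
    appAux (eqvNN e' b) (Matrix.fromBlocks 1 0 (-f') M')
        (fun i => Sum.elim 0 (ws i))
      = Matrix.fromBlocks 1 0 (-f') (appAux e' M' ws) := by
  ext i j
  rcases i with i | i <;> rcases j with j | j
  · simp [eqvNN, appAux]
  · rcases he : e' j with ja | jd <;> simp [eqvNN, he, appAux]
  · simp [eqvNN, appAux]
  · rcases he : e' j with ja | jd <;> simp [eqvNN, he, appAux]

variable {N : Type*} [AddCommGroup N] [Module R N]

lemma exists_lift_matrix (π : (Fin b → R) →ₗ[R] N) (π' : (Fin b' → R) →ₗ[R] N)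
    (hπ : Function.Surjective π) :
    ∃ f : Matrix (Fin b) (Fin b') R, π.comp f.mulVecLin = π' := by
  classical
  refine ⟨Matrix.of fun i j => Classical.choose (hπ (π' (Pi.single j 1))) i, ?_⟩
  apply (Pi.basisFun R (Fin b')).ext
  intro j
  have h1 : (Matrix.of fun i j => Classical.choose (hπ (π' (Pi.single j 1))) i).mulVecLin
      (Pi.basisFun R (Fin b') j) = Classical.choose (hπ (π' (Pi.single j 1))) := by
    funext i
    simp [Matrix.mulVecLin_apply, Pi.basisFun_apply, Matrix.mulVec_single]
  rw [LinearMap.comp_apply, h1, Classical.choose_spec (hπ (π' (Pi.single j 1)))]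
  simp [Pi.basisFun_apply]

end Blocks

/-- The Alexander function of a deficiency-`d` presented module is well defined up to
a unit: for two injective free presentations of the same module `N`, the appended
determinants agree up to a single unit independent of the chosen vectors. -/
theorem alexanderFunction_welldefined_up_to_unit {R : Type*} [CommRing R]
    {N : Type*} [AddCommGroup N] [Module R N]
    {a b a' b' d : ℕ} (h : a + d = b) (h' : a' + d = b')
    (M : Matrix (Fin b) (Fin a) R) (M' : Matrix (Fin b') (Fin a') R)
    (π : (Fin b → R) →ₗ[R] N) (π' : (Fin b' → R) →ₗ[R] N)
    (hπ : Function.Surjective π) (hπ' : Function.Surjective π')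
    (hMinj : Function.Injective M.mulVecLin)
    (hM'inj : Function.Injective M'.mulVecLin)
    (hM : LinearMap.range M.mulVecLin = LinearMap.ker π)
    (hM' : LinearMap.range M'.mulVecLin = LinearMap.ker π') :
    ∃ u : Rˣ, ∀ (us : Fin d → Fin b → R) (ws : Fin d → Fin b' → R),
      (∀ i, π (us i) = π' (ws i)) →
      (appendedCols h' M' ws).det = (u : R) * (appendedCols h M us).det := by
  classical
  have hdec1 : ∀ w : (Fin a ⊕ Fin b') → R, w = Sum.elim (w ∘ Sum.inl) (w ∘ Sum.inr) :=
    fun w => funext fun i => by cases i <;> rfl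
  have hdec2 : ∀ w : (Fin b ⊕ Fin a') → R, w = Sum.elim (w ∘ Sum.inl) (w ∘ Sum.inr) :=
    fun w => funext fun i => by cases i <;> rfl
  set e : Fin b ≃ Fin a ⊕ Fin d := (finSumFinEquiv.trans (finCongr h)).symm with he
  set e' : Fin b' ≃ Fin a' ⊕ Fin d := (finSumFinEquiv.trans (finCongr h')).symm with he'
  obtain ⟨f, hf⟩ := exists_lift_matrix π π' hπ
  obtain ⟨f', hf'⟩ := exists_lift_matrix π' π hπ'
  set MM : Matrix (Fin b ⊕ Fin b') (Fin a ⊕ Fin b') R :=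
    Matrix.fromBlocks M (-f) 0 1 with hMM
  set NN : Matrix (Fin b ⊕ Fin b') (Fin b ⊕ Fin a') R :=
    Matrix.fromBlocks 1 0 (-f') M' with hNN
  set pp : ((Fin b ⊕ Fin b') → R) →ₗ[R] N :=
    π.comp (LinearMap.funLeft R R Sum.inl) + π'.comp (LinearMap.funLeft R R Sum.inr) with hpp
  have hppapply : ∀ w : (Fin b ⊕ Fin b') → R,
      pp w = π (w ∘ Sum.inl) + π' (w ∘ Sum.inr) := fun w => rfl
  have hMMv : ∀ (x : Fin a → R) (y : Fin b' → R),
      MM.mulVecLin (Sum.elim x y) = Sum.elim (M.mulVec x - f.mulVec y) y := by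
    intro x y
    show (Matrix.fromBlocks M (-f) 0 1).mulVec (Sum.elim x y) = _
    rw [Matrix.fromBlocks_mulVec]
    simp [Matrix.neg_mulVec, sub_eq_add_neg]
  have hNNv : ∀ (x : Fin b → R) (s : Fin a' → R),
      NN.mulVecLin (Sum.elim x s) = Sum.elim x (M'.mulVec s - f'.mulVec x) := by
    intro x s
    show (Matrix.fromBlocks 1 0 (-f') M').mulVec (Sum.elim x s) = _
    rw [Matrix.fromBlocks_mulVec]
    simp [Matrix.neg_mulVec, neg_add_eq_sub]
  have hfapp : ∀ y : Fin b' → R, π (f.mulVec y) = π' y := fun y => LinearMap.congr_fun hf y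
  have hf'app : ∀ x : Fin b → R, π' (f'.mulVec x) = π x := fun x => LinearMap.congr_fun hf' x
  -- injectivity of the big matrices
  have hMMinj : Function.Injective MM.mulVecLin := by
    refine LinearMap.ker_eq_bot.mp (LinearMap.ker_eq_bot'.mpr fun w hw => ?_)
    rw [hdec1 w, hMMv] at hw
    have hy : w ∘ Sum.inr = 0 := funext fun i => congrFun hw (Sum.inr i)
    have hx0 : M.mulVec (w ∘ Sum.inl) - f.mulVec (w ∘ Sum.inr) = 0 :=
      funext fun i => congrFun hw (Sum.inl i)
    rw [hy, Matrix.mulVec_zero, sub_zero] at hx0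
    have hx : w ∘ Sum.inl = 0 := hMinj (by simpa using hx0)
    funext i
    rcases i with i | i
    · exact congrFun hx i
    · exact congrFun hy i
  have hNNinj : Function.Injective NN.mulVecLin := by
    refine LinearMap.ker_eq_bot.mp (LinearMap.ker_eq_bot'.mpr fun w hw => ?_)
    rw [hdec2 w, hNNv] at hw
    have hx : w ∘ Sum.inl = 0 := funext fun i => congrFun hw (Sum.inl i)
    have hs0 : M'.mulVec (w ∘ Sum.inr) - f'.mulVec (w ∘ Sum.inl) = 0 :=
      funext fun i => congrFun hw (Sum.inr i)
    rw [hx, Matrix.mulVec_zero, sub_zero] at hs0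
    have hs : w ∘ Sum.inr = 0 := hM'inj (by simpa using hs0)
    funext i
    rcases i with i | i
    · exact congrFun hx i
    · exact congrFun hs i
  -- ranges of the big matrices equal the kernel of `pp`
  have hMMr : LinearMap.range MM.mulVecLin = LinearMap.ker pp := by
    apply le_antisymm
    · rintro _ ⟨w, rfl⟩
      rw [LinearMap.mem_ker, hdec1 w, hMMv, hppapply]
      simp only [Sum.elim_comp_inl, Sum.elim_comp_inr]
      have h1 : π (M.mulVec (w ∘ Sum.inl)) = 0 := by
        have : M.mulVec (w ∘ Sum.inl) ∈ LinearMap.ker π := hM ▸ ⟨w ∘ Sum.inl, rfl⟩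
        simpa [LinearMap.mem_ker] using this
      rw [map_sub, h1, hfapp]
      abel
    · intro w hw
      rw [LinearMap.mem_ker, hppapply] at hw
      have h3 : π ((w ∘ Sum.inl) + f.mulVec (w ∘ Sum.inr)) = 0 := by
        rw [map_add, hfapp]; exact hw
      have h4 : (w ∘ Sum.inl) + f.mulVec (w ∘ Sum.inr)
          ∈ LinearMap.range M.mulVecLin := by
        rw [hM]; exact h3
      obtain ⟨s, hs⟩ := h4
      refine ⟨Sum.elim s (w ∘ Sum.inr), ?_⟩
      rw [hMMv]
      have hs' : M.mulVec s = (w ∘ Sum.inl) + f.mulVec (w ∘ Sum.inr) := hs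
      rw [hs']
      funext i
      rcases i with i | i
      · show (w ∘ Sum.inl) i + f.mulVec (w ∘ Sum.inr) i - f.mulVec (w ∘ Sum.inr) i = _
        ring_nf
        rfl
      · rfl
  have hNNr : LinearMap.range NN.mulVecLin = LinearMap.ker pp := by
    apply le_antisymm
    · rintro _ ⟨w, rfl⟩
      rw [LinearMap.mem_ker, hdec2 w, hNNv, hppapply]
      simp only [Sum.elim_comp_inl, Sum.elim_comp_inr]
      have h1 : π' (M'.mulVec (w ∘ Sum.inr)) = 0 := by
        have : M'.mulVec (w ∘ Sum.inr) ∈ LinearMap.ker π' := hM' ▸ ⟨w ∘ Sum.inr, rfl⟩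
        simpa [LinearMap.mem_ker] using this
      rw [map_sub, h1, hf'app]
      abel
    · intro w hw
      rw [LinearMap.mem_ker, hppapply] at hw
      have h3 : π' ((w ∘ Sum.inr) + f'.mulVec (w ∘ Sum.inl)) = 0 := by
        rw [map_add, hf'app]; rw [add_comm] at hw; exact hw
      have h4 : (w ∘ Sum.inr) + f'.mulVec (w ∘ Sum.inl)
          ∈ LinearMap.range M'.mulVecLin := by
        rw [hM']; exact h3
      obtain ⟨s, hs⟩ := h4
      refine ⟨Sum.elim (w ∘ Sum.inl) s, ?_⟩
      rw [hNNv]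
      have hs' : M'.mulVec s = (w ∘ Sum.inr) + f'.mulVec (w ∘ Sum.inl) := hs
      rw [hs']
      funext i
      rcases i with i | i
      · rfl
      · show (w ∘ Sum.inr) i + f'.mulVec (w ∘ Sum.inl) i - f'.mulVec (w ∘ Sum.inl) i = _
        ring_nf
        rfl
  have hr : LinearMap.range MM.mulVecLin = LinearMap.range NN.mulVecLin :=
    hMMr.trans hNNr.symm
  obtain ⟨c, hc⟩ := appAux_det_comp (eqvMM e b') (eqvNN e' b) MM NN hMMinj hNNinj hr
  refine ⟨c⁻¹, fun us ws hmatch => ?_⟩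
  set V : Fin d → (Fin b ⊕ Fin b') → R := fun i => Sum.elim (us i) 0 with hV
  set W : Fin d → (Fin b ⊕ Fin b') → R := fun i => Sum.elim 0 (ws i) with hW
  have hVW : ∀ i, pp (V i) = pp (W i) := by
    intro i
    rw [hppapply, hppapply]
    simp only [hV, hW, Sum.elim_comp_inl, Sum.elim_comp_inr, map_zero]
    rw [add_zero, zero_add]
    exact hmatch i
  have hdetswap : (appAux (eqvMM e b') MM W).det = (appAux (eqvMM e b') MM V).det :=
    appAux_det_eq_of_pi_eq (eqvMM e b') MM pp hMMr V W hVW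
  have hA4 : (appAux (eqvMM e b') MM V).det = (appAux e M us).det := by
    rw [hMM, hV, block1, Matrix.det_fromBlocks_zero₂₁, Matrix.det_one, mul_one]
  have hA3 : (appAux (eqvNN e' b) NN W).det = (appAux e' M' ws).det := by
    rw [hNN, hW, block2, Matrix.det_fromBlocks_zero₁₂, Matrix.det_one, one_mul]
  have hgoal1 : appendedCols h' M' ws = appAux e' M' ws := rfl
  have hgoal2 : appendedCols h M us = appAux e M us := rfl
  calc (appendedCols h' M' ws).det
      = (appAux (eqvNN e' b) NN W).det := by rw [hgoal1, hA3]
    _ = (↑c⁻¹ : R) * ((c : R) * (appAux (eqvNN e' b) NN W).det) := by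
        rw [← mul_assoc, Units.inv_mul, one_mul]
    _ = (↑c⁻¹ : R) * (appAux (eqvMM e b') MM W).det := by rw [hc W]
    _ = (↑c⁻¹ : R) * (appAux (eqvMM e b') MM V).det := by rw [hdetswap]
    _ = (↑c⁻¹ : R) * (appendedCols h M us).det := by rw [hA4, hgoal2]
end

section
/- Let R be a nontrivial commutative ring, V a free R-module of rank n, and 0 ≤ k ≤ n. The wedge product induces a perfect pairing between the k-th and (n−k)-th exterior powers: the R-linear map Λ^k V → Hom_R(Λ^{n−k} V, Λ^n V) sending x to (y ↦ x ∧ y) is an isomorphism of R-modules. -/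
open ExteriorAlgebra

/-- The `k`-th exterior power of `V`, realized as the `k`-th power of the submodule
`range (ι R)` inside the exterior algebra. -/
noncomputable abbrev extPow (R : Type*) [CommRing R] (V : Type*) [AddCommGroup V]
    [Module R V] (k : ℕ) : Submodule R (ExteriorAlgebra R V) :=
  LinearMap.range (ι R : V →ₗ[R] ExteriorAlgebra R V) ^ k

/-- The linear map `Λ^k V → Hom(Λ^{n−k} V, Λ^n V)` induced by the wedge (algebra)
product, `x ↦ (y ↦ x ∧ y)`. -/
noncomputable def wedgePairingMap (R : Type*) [CommRing R] (V : Type*) [AddCommGroup V]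
    [Module R V] (n k : ℕ) (hk : k ≤ n) :
    extPow R V k →ₗ[R] (extPow R V (n - k) →ₗ[R] extPow R V n) where
  toFun x :=
    { toFun := fun y => ⟨(x : ExteriorAlgebra R V) * (y : ExteriorAlgebra R V), by
        have hxy := Submodule.mul_mem_mul x.2 y.2
        rwa [← pow_add, Nat.add_sub_cancel' hk] at hxy⟩
      map_add' := fun y z => Subtype.ext (by simp [mul_add])
      map_smul' := fun r y => Subtype.ext (by simp [mul_smul_comm]) }
  map_add' x y := LinearMap.ext fun z => Subtype.ext (by simp [add_mul])
  map_smul' r x := LinearMap.ext fun z => Subtype.ext (by simp [smul_mul_assoc])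

section WedgeAux
section Aux

variable {R : Type*} [CommRing R] {V : Type*} [AddCommGroup V] [Module R V]

lemma iMulti_cast {a c : ℕ} (h : c = a) (v : Fin a → V) :
    ιMulti R a v = ιMulti R c (v ∘ Fin.cast h) := by
  subst h; rfl

lemma iMulti_mul {k m : ℕ} (u : Fin k → V) (w : Fin m → V) :
    (ιMulti R k u : ExteriorAlgebra R V) * ιMulti R m w
      = ιMulti R (k + m) (Fin.append u w) := by
  have h : (fun i => ι R (Fin.append u w i))
      = Fin.append (fun i => (ι R) (u i)) (fun i => (ι R) (w i)) := by
    funext i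
    refine Fin.addCases (fun i => ?_) (fun i => ?_) i <;>
      simp [Fin.append_left, Fin.append_right]
  rw [ιMulti_apply, ιMulti_apply, ιMulti_apply, ← List.prod_append, ← List.ofFn_fin_append, h]

variable {n : ℕ} (b : Module.Basis (Fin n) R V)

lemma iMulti_family_mem {k : ℕ} (s : {s : Finset (Fin n) // s.card = k}) :
    ιMulti_family R k b s ∈ extPow R V k :=
  ιMulti_range R k (Set.mem_range_self _)

lemma iMulti_comp_eq_sign_smul {k : ℕ} (r : Fin k → Fin n) (hr : Function.Injective r)
    (s : Finset (Fin n)) (hs : s.card = k) (him : ∀ i, r i ∈ s) :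
    ∃ σ : Equiv.Perm (Fin k),
      ιMulti R k (fun i => b (r i)) = Equiv.Perm.sign σ • ιMulti_family R k b ⟨s, hs⟩ := by
  have hb : Function.Bijective (fun i : Fin k => (⟨r i, him i⟩ : {x // x ∈ s})) := by
    rw [Fintype.bijective_iff_injective_and_card]
    refine ⟨fun i j hij => hr (congrArg Subtype.val hij), by simp [Fintype.card_coe, hs]⟩
  set σ : Equiv.Perm (Fin k) :=
    (Equiv.ofBijective _ hb).trans (s.orderIsoOfFin hs).toEquiv.symm with hσ
  refine ⟨σ, ?_⟩
  have hv : ((fun i => b ((s.orderIsoOfFin hs i : Fin n))) ∘ σ) = fun i => b (r i) := by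
    funext i
    simp only [hσ, Function.comp_apply, Equiv.trans_apply, Equiv.ofBijective_apply]
    simp
  rw [← hv]
  exact AlternatingMap.map_perm _ _ σ

end Aux

section More
variable {R : Type*} [CommRing R] [Nontrivial R] {V : Type*} [AddCommGroup V] [Module R V]
  {n : ℕ} (b : Module.Basis (Fin n) R V)

lemma comp_append' {α β : Type*} {k m : ℕ} (f : α → β) (a : Fin k → α) (c : Fin m → α) :
    (fun i => f (Fin.append a c i)) = Fin.append (f ∘ a) (f ∘ c) := by
  funext i
  refine Fin.addCases (fun i => ?_) (fun i => ?_) i <;>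
    simp [Fin.append_left, Fin.append_right]

lemma extPow_le_span (k : ℕ) :
    extPow R V k ≤ Submodule.span R (Set.range (ιMulti_family R k b)) := by
  have he : extPow R V k = ⋀[R]^k V := rfl
  rw [he, ← ιMulti_span_fixedDegree]
  refine Submodule.span_le.2 ?_
  rintro _ ⟨v, rfl⟩
  have hv : (ιMulti R k v : ExteriorAlgebra R V)
      = ιMulti R k (fun i => ∑ j, b.equivFun (v i) j • b j) := by
    congr 1
    funext i
    exact (b.sum_equivFun (v i)).symm
  rw [hv]
  have h1 : (ιMulti R k (fun i => ∑ j, b.equivFun (v i) j • b j) : ExteriorAlgebra R V)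
      = ∑ r : Fin k → Fin n, ιMulti R k (fun i => b.equivFun (v i) (r i) • b (r i)) := by
    simp only [← AlternatingMap.coe_multilinearMap]
    exact MultilinearMap.map_sum _ _
  rw [h1]
  refine Submodule.sum_mem _ fun r _ => ?_
  have h2 : (ιMulti R k (fun i => b.equivFun (v i) (r i) • b (r i)) : ExteriorAlgebra R V)
      = (∏ i, b.equivFun (v i) (r i)) • ιMulti R k (fun i => b (r i)) := by
    simp only [← AlternatingMap.coe_multilinearMap]
    exact MultilinearMap.map_smul_univ _ _ _
  rw [h2]
  refine Submodule.smul_mem _ _ ?_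
  by_cases hr : Function.Injective r
  · obtain ⟨σ, hσ⟩ := iMulti_comp_eq_sign_smul b r hr (Finset.image r Finset.univ)
      (by rw [Finset.card_image_of_injective _ hr, Finset.card_univ, Fintype.card_fin])
      (fun i => Finset.mem_image_of_mem r (Finset.mem_univ i))
    rw [hσ, Units.smul_def]
    exact zsmul_mem (Submodule.subset_span (Set.mem_range_self _)) _
  · rw [(ιMulti R k).map_eq_zero_of_not_injective _
      (fun hinj => hr fun i j hij => hinj (congrArg b hij))]
    exact Submodule.zero_mem _

lemma span_fam_top (k : ℕ) :
    Submodule.span R (Set.range (fun s =>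
      (⟨ιMulti_family R k b s, iMulti_family_mem b s⟩ : extPow R V k))) = ⊤ := by
  apply Submodule.map_injective_of_injective (Submodule.injective_subtype (extPow R V k))
  rw [Submodule.map_span, Submodule.map_top, Submodule.range_subtype, ← Set.range_comp]
  have h : ((extPow R V k).subtype ∘ fun s =>
      (⟨ιMulti_family R k b s, iMulti_family_mem b s⟩ : extPow R V k))
        = ιMulti_family R k b := rfl
  rw [h]
  refine le_antisymm (Submodule.span_le.2 ?_) (extPow_le_span b k)
  rintro _ ⟨s, rfl⟩
  exact iMulti_family_mem b s

lemma fam_mul_fam_of_not_disjoint {k m : ℕ} (s t : Finset (Fin n)) (hs : s.card = k)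
    (ht : t.card = m) (hst : ¬ Disjoint s t) :
    (ιMulti_family R k b ⟨s, hs⟩ : ExteriorAlgebra R V) * ιMulti_family R m b ⟨t, ht⟩ = 0 := by
  rw [ιMulti_family, ιMulti_family, iMulti_mul]
  obtain ⟨x, hxs, hxt⟩ := Finset.not_disjoint_iff.1 hst
  refine AlternatingMap.map_eq_zero_of_not_injective _ _ (fun hinj => ?_)
  set i : Fin k := (s.orderIsoOfFin hs).symm ⟨x, hxs⟩
  set j : Fin m := (t.orderIsoOfFin ht).symm ⟨x, hxt⟩
  have h1 : Fin.append (fun i => b ((s.orderIsoOfFin hs i : Fin n)))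
      (fun i => b ((t.orderIsoOfFin ht i : Fin n))) (Fin.castAdd m i) = b x := by
    rw [Fin.append_left]; simp [i]
  have h2 : Fin.append (fun i => b ((s.orderIsoOfFin hs i : Fin n)))
      (fun i => b ((t.orderIsoOfFin ht i : Fin n))) (Fin.natAdd k j) = b x := by
    rw [Fin.append_right]; simp [j]
  have := hinj (h1.trans h2.symm)
  have hlt : ((Fin.castAdd m i : Fin (k + m)) : ℕ) < ((Fin.natAdd k j : Fin (k + m)) : ℕ) := by
    simp only [Fin.coe_castAdd, Fin.coe_natAdd]
    omega
  rw [this] at hlt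
  exact lt_irrefl _ hlt

end More

section Compl
variable {R : Type*} [CommRing R] {V : Type*} [AddCommGroup V] [Module R V]
  {n : ℕ} (b : Module.Basis (Fin n) R V)

lemma append_injective {α : Type*} {k m : ℕ} {f : Fin k → α} {g : Fin m → α}
    (hf : Function.Injective f) (hg : Function.Injective g)
    (hd : ∀ i j, f i ≠ g j) : Function.Injective (Fin.append f g) := by
  intro a c h
  induction a using Fin.addCases with
  | left a =>
    induction c using Fin.addCases with
    | left c =>
      rw [Fin.append_left, Fin.append_left] at h
      exact congrArg (Fin.castAdd m) (hf h)
    | right c =>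
      rw [Fin.append_left, Fin.append_right] at h
      exact absurd h (hd a c)
  | right a =>
    induction c using Fin.addCases with
    | left c =>
      rw [Fin.append_right, Fin.append_left] at h
      exact absurd h.symm (hd c a)
    | right c =>
      rw [Fin.append_right, Fin.append_right] at h
      exact congrArg (Fin.natAdd k) (hg h)

lemma fam_mul_fam_compl {k : ℕ} (hk : k ≤ n) (s : Finset (Fin n)) (hs : s.card = k)
    (hsc : sᶜ.card = n - k) (hu : (Finset.univ : Finset (Fin n)).card = n) :
    ∃ u : ℤˣ,
      (ιMulti_family R k b ⟨s, hs⟩ : ExteriorAlgebra R V)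
          * ιMulti_family R (n - k) b ⟨sᶜ, hsc⟩
        = u • ιMulti_family R n b ⟨Finset.univ, hu⟩ := by
  have hn : n = k + (n - k) := (Nat.add_sub_cancel' hk).symm
  set es : Fin k → Fin n := fun i => (s.orderIsoOfFin hs i : Fin n) with hes
  set et : Fin (n - k) → Fin n := fun i => (sᶜ.orderIsoOfFin hsc i : Fin n) with het
  set r : Fin n → Fin n := fun i => Fin.append es et (Fin.cast hn i) with hr
  have happ : Fin.append (fun i => b (es i)) (fun i => b (et i))
      = fun i => b (Fin.append es et i) := by
    rw [comp_append' b es et]; rfl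
  have hprod : (ιMulti_family R k b ⟨s, hs⟩ : ExteriorAlgebra R V)
      * ιMulti_family R (n - k) b ⟨sᶜ, hsc⟩ = ιMulti R n (fun i => b (r i)) := by
    have e1 : (ιMulti_family R k b ⟨s, hs⟩ : ExteriorAlgebra R V)
        = ιMulti R k (fun i => b (es i)) := rfl
    have e2 : (ιMulti_family R (n - k) b ⟨sᶜ, hsc⟩ : ExteriorAlgebra R V)
        = ιMulti R (n - k) (fun i => b (et i)) := rfl
    rw [e1, e2, iMulti_mul, happ, iMulti_cast hn (fun i => b (Fin.append es et i))]
    rfl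
  have hesinj : Function.Injective es := fun i j hij => by
    have := (s.orderIsoOfFin hs).injective (Subtype.coe_injective hij)
    exact this
  have hetinj : Function.Injective et := fun i j hij => by
    have := (sᶜ.orderIsoOfFin hsc).injective (Subtype.coe_injective hij)
    exact this
  have hd : ∀ i j, es i ≠ et j := by
    intro i j hij
    have h1 : es i ∈ s := (s.orderIsoOfFin hs i).2
    have h2 : et j ∈ sᶜ := (sᶜ.orderIsoOfFin hsc j).2
    rw [hij] at h1
    exact (Finset.mem_compl.1 h2) h1
  have hrinj : Function.Injective r :=
    (append_injective hesinj hetinj hd).comp (Fin.cast_injective hn)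
  obtain ⟨σ, hσ⟩ := iMulti_comp_eq_sign_smul b r hrinj Finset.univ hu
    (fun i => Finset.mem_univ _)
  exact ⟨Equiv.Perm.sign σ, hprod.trans hσ⟩

end Compl

section Det
variable {R : Type*} [CommRing R] {V : Type*} [AddCommGroup V] [Module R V]
  {n : ℕ} (b : Module.Basis (Fin n) R V)

/-- A functional on the exterior algebra extracting the top coefficient (up to sign). -/
noncomputable def detFun : ExteriorAlgebra R V →ₗ[R] R :=
  liftAlternating (Function.update
    (fun _ => 0 : ∀ i : ℕ, V [⋀^Fin i]→ₗ[R] R) n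
    (Matrix.detRowAlternating.compLinearMap b.equivFun.toLinearMap))

lemma detFun_univ (hu : (Finset.univ : Finset (Fin n)).card = n) :
    ∃ u : ℤˣ, detFun b (ιMulti_family R n b ⟨Finset.univ, hu⟩) = ((u : ℤ) : R) := by
  set g : Fin n → Fin n := fun i => (Finset.univ.orderIsoOfFin hu i : Fin n) with hg
  have hginj : Function.Injective g := fun i j hij =>
    (Finset.univ.orderIsoOfFin hu).injective (Subtype.coe_injective hij)
  have hgbij : Function.Bijective g := (Finite.injective_iff_bijective).1 hginj
  set π : Equiv.Perm (Fin n) := Equiv.ofBijective g hgbij with hπ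
  refine ⟨Equiv.Perm.sign π, ?_⟩
  have h0 : (ιMulti_family R n b ⟨Finset.univ, hu⟩ : ExteriorAlgebra R V)
      = ιMulti R n (fun i => b (g i)) := rfl
  rw [h0, detFun, liftAlternating_apply_ιMulti, Function.update_self,
    AlternatingMap.compLinearMap_apply]
  have h1 : Matrix.detRowAlternating (fun i => b.equivFun.toLinearMap (b (g i)))
      = Matrix.det (π.permMatrix R) := by
    congr 1
    ext i j
    simp only [LinearEquiv.coe_coe, Module.Basis.equivFun_self]
    simp [Equiv.Perm.permMatrix, PEquiv.toMatrix_apply, Equiv.toPEquiv_apply, hπ,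
      Equiv.ofBijective_apply, eq_comm]
  rw [h1, Matrix.det_permutation]

lemma subtype_card_n_eq (s : {s : Finset (Fin n) // s.card = n})
    (hu : (Finset.univ : Finset (Fin n)).card = n) : s = ⟨Finset.univ, hu⟩ :=
  Subtype.ext (Finset.eq_univ_of_card s.1 (s.2.trans (Fintype.card_fin n).symm))

lemma exists_coeff [Nontrivial R] (hu : (Finset.univ : Finset (Fin n)).card = n)
    {z : ExteriorAlgebra R V} (hz : z ∈ extPow R V n) :
    ∃ c : R, z = c • ιMulti_family R n b ⟨Finset.univ, hu⟩ := by
  have h1 := extPow_le_span b n hz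
  have h2 : Set.range (ιMulti_family R n b)
      ⊆ {ιMulti_family R n b ⟨Finset.univ, hu⟩} := by
    rintro _ ⟨s, rfl⟩
    rw [subtype_card_n_eq s hu]
    rfl
  have h3 := Submodule.span_mono h2 h1
  rw [Submodule.mem_span_singleton] at h3
  obtain ⟨c, hc⟩ := h3
  exact ⟨c, hc.symm⟩

end Det

lemma units_smul_cancel {M : Type*} [AddCommGroup M] (u : ℤˣ) (x : M) :
    (u : ℤ) • (u : ℤ) • x = x := by
  rw [smul_smul, ← Units.val_mul, Int.units_mul_self, Units.val_one, one_smul]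

end WedgeAux

/-- For a free module `V` of rank `n` over a nontrivial commutative ring, the wedge
product gives a perfect pairing: `Λ^k V → Hom(Λ^{n−k} V, Λ^n V)`, `x ↦ (y ↦ x ∧ y)`,
is an isomorphism of `R`-modules. -/

theorem wedgePairing_bijective {R : Type*} [CommRing R] [Nontrivial R]
    {V : Type*} [AddCommGroup V] [Module R V] {n : ℕ} (b : Module.Basis (Fin n) R V)
    (k : ℕ) (hk : k ≤ n) :
    Function.Bijective (wedgePairingMap R V n k hk) := by
  classical
  have hu : (Finset.univ : Finset (Fin n)).card = n := by simp
  set W := wedgePairingMap R V n k hk with hWdef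
  have hW : ∀ (x : extPow R V k) (y : extPow R V (n - k)),
      ((W x y : extPow R V n) : ExteriorAlgebra R V)
        = (x : ExteriorAlgebra R V) * (y : ExteriorAlgebra R V) := fun x y => rfl
  set famK : {s : Finset (Fin n) // s.card = k} → extPow R V k :=
    fun s => ⟨ιMulti_family R k b s, iMulti_family_mem b s⟩ with hfamK
  set famM : {s : Finset (Fin n) // s.card = n - k} → extPow R V (n - k) :=
    fun s => ⟨ιMulti_family R (n - k) b s, iMulti_family_mem b s⟩ with hfamM
  set eU : extPow R V n :=
    ⟨ιMulti_family R n b ⟨Finset.univ, hu⟩, iMulti_family_mem b _⟩ with heU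
  obtain ⟨u, hu1⟩ := detFun_univ b hu
  set coefL : extPow R V n →ₗ[R] R :=
    ((u : ℤ) : R) • (detFun b ∘ₗ (extPow R V n).subtype) with hcoefL
  have hcoef_eU : coefL eU = 1 := by
    have : coefL eU = ((u : ℤ) : R) * ((u : ℤ) : R) := by
      simp [hcoefL, heU, hu1]
    rw [this, ← Int.cast_mul, ← Units.val_mul, Int.units_mul_self, Units.val_one, Int.cast_one]
  have hrep : ∀ z : extPow R V n, (coefL z) • eU = z := by
    intro z
    obtain ⟨c, hc⟩ := exists_coeff b hu z.2
    have hz : z = c • eU := Subtype.ext (by rw [hc]; rfl)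
    rw [hz, map_smul, smul_eq_mul, hcoef_eU, mul_one]
  have hcompl_card : ∀ s : {s : Finset (Fin n) // s.card = k}, (s.1ᶜ).card = n - k :=
    fun s => by rw [Finset.card_compl, s.2, Fintype.card_fin]
  choose ε hε using fun s : {s : Finset (Fin n) // s.card = k} =>
    fam_mul_fam_compl b hk s.1 s.2 (hcompl_card s) hu
  -- the inverse map
  set Ψ : (extPow R V (n - k) →ₗ[R] extPow R V n) →ₗ[R] extPow R V k :=
    ∑ s : {s : Finset (Fin n) // s.card = k},
      LinearMap.toSpanSingleton R _ ((ε s : ℤ) • famK s) ∘ₗ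
        (coefL ∘ₗ LinearMap.applyₗ (famM ⟨s.1ᶜ, hcompl_card s⟩)) with hΨ
  have hΨ_apply : ∀ φ, Ψ φ = ∑ s : {s : Finset (Fin n) // s.card = k},
      coefL (φ (famM ⟨s.1ᶜ, hcompl_card s⟩)) • ((ε s : ℤ) • famK s) := by
    intro φ
    rw [hΨ, LinearMap.sum_apply]
    rfl
  -- main product computations
  have hprod_compl : ∀ s : {s : Finset (Fin n) // s.card = k},
      W (famK s) (famM ⟨s.1ᶜ, hcompl_card s⟩) = (ε s : ℤ) • eU := by
    intro s
    refine Subtype.ext ?_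
    rw [hW]
    have := hε s
    rw [Units.smul_def] at this
    exact this.trans (by simp; rfl)
  have hprod_zero : ∀ (s : {s : Finset (Fin n) // s.card = k})
      (t : {t : Finset (Fin n) // t.card = n - k}), ¬ Disjoint s.1 t.1 →
      W (famK s) (famM t) = 0 := by
    intro s t hst
    refine Subtype.ext ?_
    rw [hW]
    exact (fam_mul_fam_of_not_disjoint b s.1 t.1 s.2 t.2 hst).trans (by simp)
  -- not-disjoint criteria
  have hnd1 : ∀ s t : {s : Finset (Fin n) // s.card = k}, t ≠ s →
      ¬ Disjoint t.1 s.1ᶜ := by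
    intro s t hts hdisj
    have hsub : t.1 ⊆ s.1 := by
      intro x hx
      by_contra hxs
      exact (Finset.disjoint_left.1 hdisj) hx (Finset.mem_compl.2 hxs)
    exact hts (Subtype.ext (Finset.eq_of_subset_of_card_le hsub (by rw [s.2, t.2])))
  -- left inverse on the spanning family
  have hleft : ∀ s, Ψ (W (famK s)) = famK s := by
    intro s
    rw [hΨ_apply]
    rw [Fintype.sum_eq_single s]
    · rw [hprod_compl s, map_zsmul, hcoef_eU]
      have h2 : ((ε s : ℤ) • (1 : R)) • ((ε s : ℤ) • famK s)
          = ((ε s : ℤ) : R) • ((ε s : ℤ) • famK s) := by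
        norm_num
      rw [h2]; exact (Int.cast_smul_eq_zsmul (R := R) ((ε s : ℤ)) _).trans (units_smul_cancel _ _)
    · intro t hts
      rw [hprod_zero s ⟨t.1ᶜ, hcompl_card t⟩ (hnd1 t s (Ne.symm hts)), map_zero, zero_smul]
  have hinj : Function.Injective W := by
    have hcomp : Ψ ∘ₗ W = LinearMap.id := by
      apply LinearMap.ext_on_range (span_fam_top b k)
      intro s
      simpa using hleft s
    intro x y hxy
    have h1 : Ψ (W x) = Ψ (W y) := by rw [hxy]
    have h2 : ∀ z, Ψ (W z) = z := fun z => by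
      have := congrArg (fun f => f z) hcomp
      simpa using this
    rw [h2 x, h2 y] at h1
    exact h1
  refine ⟨hinj, ?_⟩
  -- surjectivity
  intro φ
  refine ⟨Ψ φ, ?_⟩
  apply LinearMap.ext_on_range (span_fam_top b (n - k))
  intro t
  set s₀ : {s : Finset (Fin n) // s.card = k} :=
    ⟨t.1ᶜ, by rw [Finset.card_compl, t.2, Fintype.card_fin, Nat.sub_sub_self hk]⟩ with hs₀
  have ht : (⟨s₀.1ᶜ, hcompl_card s₀⟩ : {t : Finset (Fin n) // t.card = n - k}) = t :=
    Subtype.ext (by simp [hs₀])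
  have hWlin : W (Ψ φ) (famM t)
      = ∑ s : {s : Finset (Fin n) // s.card = k},
        coefL (φ (famM ⟨s.1ᶜ, hcompl_card s⟩)) • ((ε s : ℤ) • (W (famK s) (famM t))) := by
    rw [hΨ_apply, map_sum, LinearMap.sum_apply]
    congr 1
    funext s
    rw [map_smul, LinearMap.smul_apply, map_zsmul, LinearMap.smul_apply]
    simp
  rw [hWlin, Fintype.sum_eq_single s₀]
  · rw [← ht, hprod_compl s₀, ht]
    rw [units_smul_cancel, hrep]
  · intro s hs
    rw [hprod_zero s t ?_, smul_zero, smul_zero]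
    intro hdisj
    have hsub : s.1 ⊆ t.1ᶜ := fun x hx =>
      Finset.mem_compl.2 fun hxt => (Finset.disjoint_left.1 hdisj) hx hxt
    refine hs (Subtype.ext (Finset.eq_of_subset_of_card_le hsub ?_))
    rw [s.2]
    exact le_of_eq s₀.2
end
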